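/- Let p be an integer with p ≥ 3, let β > 0, E ∈ ℝ, and q₀ ∈ (0,1), and define g(q) = β·E·q^{p/2} + (1/2)·log(1−q) + (1/2)·β²·(1 − q^p − p·q^{p−1}·(1−q)) for q ∈ [0,1). If no q ∈ (0, q₀) satisfies 1/(1−q) + β²(1−q)·p(p−1)·q^{p−2} = β·p·q^{p/2−1}·E, then g is strictly decreasing on [0, q₀]. -/

import Mathlib

/-- If no `q ∈ (0, q₀)` satisfies equation (3.1), then the TAP functional `g`
is strictly decreasing on `[0, q₀]`. -/
theorem stmt15 (p : ℕ) (hp : 3 ≤ p) (β : ℝ) (hβ : 0 < β) (E : ℝ)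
    (q₀ : ℝ) (hq₀ : q₀ ∈ Set.Ioo (0:ℝ) 1)
    (g : ℝ → ℝ)
    (hg : ∀ q, g q = β * E * q ^ ((p : ℝ) / 2) + (1 / 2) * Real.log (1 - q)
        + (1 / 2) * β ^ 2 * (1 - q ^ p - (p : ℝ) * q ^ (p - 1) * (1 - q)))
    (hno : ∀ q ∈ Set.Ioo (0:ℝ) q₀,
      ¬(1 / (1 - q) + β ^ 2 * (1 - q) * ((p : ℝ) * ((p : ℝ) - 1) * q ^ (p - 2))
          = β * (p : ℝ) * q ^ ((p : ℝ) / 2 - 1) * E)) :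
    StrictAntiOn g (Set.Icc 0 q₀) := by
  obtain ⟨hq₀0, hq₀1⟩ := hq₀
  have hp3 : (3:ℝ) ≤ (p:ℝ) := by exact_mod_cast hp
  have hexp : (0:ℝ) < (p:ℝ)/2 - 1 := by linarith
  -- the candidate derivative
  set D : ℝ → ℝ := fun q => (1/2) * (β * (p:ℝ) * q ^ ((p:ℝ)/2 - 1) * E
      - 1/(1-q) - β^2 * (1-q) * ((p:ℝ) * ((p:ℝ)-1) * q ^ (p-2))) with hD
  -- g equals the explicit formula
  have hgeq : g = fun q => β * E * q ^ ((p : ℝ) / 2) + (1 / 2) * Real.log (1 - q)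
      + (1 / 2) * β ^ 2 * (1 - q ^ p - (p : ℝ) * q ^ (p - 1) * (1 - q)) := funext hg
  -- g has derivative D q at every q ∈ (0,1)
  have hderiv : ∀ q ∈ Set.Ioo (0:ℝ) 1, HasDerivAt g (D q) q := by
    intro q ⟨hq0, hq1⟩
    have h1q : (1:ℝ) - q ≠ 0 := by intro h; linarith
    have h1 : HasDerivAt (fun q : ℝ => β * E * q ^ ((p:ℝ)/2))
        (β * E * ((p:ℝ)/2 * q ^ ((p:ℝ)/2 - 1))) q :=
      (Real.hasDerivAt_rpow_const (Or.inl (ne_of_gt hq0))).const_mul (β * E)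
    have h2 : HasDerivAt (fun q : ℝ => (1/2) * Real.log (1 - q))
        ((1/2) * ((-1)/(1-q))) q := by
      have : HasDerivAt (fun q : ℝ => (1:ℝ) - q) (-1) q := by
        simpa using (hasDerivAt_id q).const_sub 1
      exact (this.log h1q).const_mul _
    have h3 : HasDerivAt (fun q : ℝ => (1/2) * β^2 * (1 - q ^ p - (p : ℝ) * q ^ (p-1) * (1-q)))
        ((1/2) * β^2 * (0 - (p:ℝ) * q ^ (p-1)
          - ((p:ℝ) * (((p-1:ℕ):ℝ) * q ^ (p-2)) * (1-q) + (p:ℝ) * q ^ (p-1) * (-1)))) q := by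
      have hpow : HasDerivAt (fun q : ℝ => q ^ p) ((p:ℝ) * q ^ (p-1)) q := by
        simpa using hasDerivAt_pow p q
      have hpow1 : HasDerivAt (fun q : ℝ => (p:ℝ) * q ^ (p-1))
          ((p:ℝ) * (((p-1:ℕ):ℝ) * q ^ (p-2))) q := by
        have : HasDerivAt (fun q : ℝ => q ^ (p-1)) (((p-1:ℕ):ℝ) * q ^ (p-1-1)) q :=
          hasDerivAt_pow (p-1) q
        have he : p - 1 - 1 = p - 2 := by omega
        rw [he] at this
        exact this.const_mul _
      have h1q' : HasDerivAt (fun q : ℝ => (1:ℝ) - q) (-1) q := by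
        simpa using (hasDerivAt_id q).const_sub 1
      exact (((hasDerivAt_const q (1:ℝ)).sub hpow).sub (hpow1.mul h1q')).const_mul _
    have := (h1.add h2).add h3
    simp only [Pi.add_def] at this
    rw [← hgeq] at this
    refine this.congr_deriv ?_
    have hc : ((p-1:ℕ):ℝ) = (p:ℝ) - 1 := by
      have : (1:ℕ) ≤ p := by omega
      push_cast [this]; ring
    rw [hD, hc]
    field_simp
    ring
  -- D is continuous on [0, q₀]
  have hDcont : ContinuousOn D (Set.Icc 0 q₀) := by
    apply ContinuousOn.mul continuousOn_const
    apply ContinuousOn.sub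
    apply ContinuousOn.sub
    · apply ContinuousOn.mul
      · exact ContinuousOn.mul continuousOn_const
          (fun x _ => (Real.continuousAt_rpow_const x _ (Or.inr hexp.le)).continuousWithinAt)
      · exact continuousOn_const
    · apply ContinuousOn.div continuousOn_const (by fun_prop)
      intro x hx
      have := hx.2
      intro h; simp only [Set.mem_Icc] at hx; linarith [hx.2]
    · fun_prop
  -- D 0 = -1/2
  have hD0 : D 0 = -(1/2) := by
    rw [hD]
    have h1 : (0:ℝ) ^ ((p:ℝ)/2 - 1) = 0 := Real.zero_rpow (ne_of_gt hexp)
    have h2 : (0:ℝ) ^ (p - 2) = 0 := by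
      apply zero_pow; omega
    simp [h1, h2]
  -- D never vanishes on (0, q₀)
  have hDne : ∀ q ∈ Set.Ioo (0:ℝ) q₀, D q ≠ 0 := by
    intro q hq hzero
    apply hno q hq
    rw [hD] at hzero
    simp only at hzero
    linarith
  -- D is negative on (0, q₀)
  have hDneg : ∀ q ∈ Set.Ioo (0:ℝ) q₀, D q < 0 := by
    intro q hq
    rcases lt_trichotomy (D q) 0 with h | h | h
    · exact h
    · exact absurd h (hDne q hq)
    · exfalso
      have hsub : Set.Icc (0:ℝ) q ⊆ Set.Icc 0 q₀ := Set.Icc_subset_Icc le_rfl hq.2.le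
      have := intermediate_value_Ioo hq.1.le (hDcont.mono hsub)
      have h0mem : (0:ℝ) ∈ Set.Ioo (D 0) (D q) := by
        constructor
        · rw [hD0]; norm_num
        · exact h
      obtain ⟨c, hc, hDc⟩ := this h0mem
      exact hDne c ⟨hc.1, lt_of_lt_of_le hc.2 hq.2.le⟩ hDc
  -- continuity of g on [0, q₀]
  have hgcont : ContinuousOn g (Set.Icc 0 q₀) := by
    rw [hgeq]
    apply ContinuousOn.add
    apply ContinuousOn.add
    · apply ContinuousOn.mul continuousOn_const
      intro x _
      exact (Real.continuousAt_rpow_const x _ (Or.inr (by linarith))).continuousWithinAt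
    · apply ContinuousOn.mul continuousOn_const
      apply ContinuousOn.log (by fun_prop)
      intro x hx
      simp only [Set.mem_Icc] at hx
      intro h; linarith [hx.2]
    · fun_prop
  apply strictAntiOn_of_deriv_neg (convex_Icc 0 q₀) hgcont
  intro x hx
  rw [interior_Icc] at hx
  have hx' : x ∈ Set.Ioo (0:ℝ) 1 := ⟨hx.1, lt_trans hx.2 hq₀1⟩
  rw [(hderiv x hx').deriv]
  exact hDneg x hx
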